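/- Let a < r < b be real numbers and let G : [a,b] → ℝ be continuous on [a,b] and differentiable on (a,b) with derivative g := G′ concave on (a,b) and g(r) = 0. Then for every y ∈ [r,b], G(y) ≥ G(r) + ((y−r)²/(b−r)²)·(G(b) − G(r)), and consequently ∫_r^b G(y) dy ≥ (b−r)·((2/3)·G(r) + (1/3)·G(b)). -/

import Mathlib

open MeasureTheory Set

/-- Intermediate estimate to the right of an interior maximizer: if `G` has a concave
derivative vanishing at `r`, then `G` is bounded below by a quadratic interpolation on
`[r,b]`, and its integral over `[r,b]` is at least `(b-r)((2/3)G(r) + (1/3)G(b))`. -/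
theorem concave_deriv_lower_bound_right
    (a r b : ℝ) (har : a < r) (hrb : r < b)
    (G g : ℝ → ℝ)
    (hGcont : ContinuousOn G (Icc a b))
    (hderiv : ∀ x ∈ Ioo a b, HasDerivAt G (g x) x)
    (hconc : ConcaveOn ℝ (Ioo a b) g)
    (hgr : g r = 0) :
    (∀ y ∈ Icc r b, G r + (y - r) ^ 2 / (b - r) ^ 2 * (G b - G r) ≤ G y) ∧
    (b - r) * ((2 / 3) * G r + (1 / 3) * G b) ≤ ∫ y in r..b, G y := by
  have hbr : (0:ℝ) < b - r := by linarith
  set Q : ℝ → ℝ := fun y => G r + (y - r) ^ 2 / (b - r) ^ 2 * (G b - G r) with hQ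
  set φ : ℝ → ℝ := fun y => G y - Q y with hφ
  set ψ : ℝ → ℝ := fun x => g x - 2 * (x - r) / (b - r) ^ 2 * (G b - G r) with hψ
  have hφr : φ r = 0 := by simp [hφ, hQ]
  have hφb : φ b = 0 := by
    simp only [hφ, hQ]
    field_simp
    ring
  have hφderiv : ∀ x ∈ Ioo a b, HasDerivAt φ (ψ x) x := by
    intro x hx
    have h1 := hderiv x hx
    have hd : HasDerivAt (fun y : ℝ => (y - r) ^ 2) (2 * (x - r)) x := by
      simpa using (((hasDerivAt_id x).sub_const r).fun_pow 2)
    have h2 : HasDerivAt Q (2 * (x - r) / (b - r) ^ 2 * (G b - G r)) x := by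
      have := ((hd.div_const ((b - r) ^ 2)).mul_const (G b - G r)).const_add (G r)
      simpa [hQ] using this
    simpa [hψ] using h1.fun_sub h2
  have hψconc : ConcaveOn ℝ (Ioo a b) ψ := by
    have haff : ConcaveOn ℝ (Ioo a b)
        (fun x => -(2 * (x - r) / (b - r) ^ 2 * (G b - G r))) := by
      refine ⟨convex_Ioo a b, ?_⟩
      intro x _ y _ p q hp hq hpq
      have hp1 : p = 1 - q := by linarith
      subst hp1
      simp only [smul_eq_mul]
      apply le_of_eq
      field_simp
      ring
    simpa [hψ, sub_eq_add_neg, Pi.add_def] using hconc.add haff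
  have hψr : ψ r = 0 := by simp [hψ, hgr]
  have key : ∀ y ∈ Icc r b, Q y ≤ G y := by
    by_contra hcon
    push_neg at hcon
    obtain ⟨y0, hy0, hy0'⟩ := hcon
    have hφcont : ContinuousOn φ (Icc r b) := by
      apply ContinuousOn.sub
      · exact hGcont.mono (Icc_subset_Icc har.le le_rfl)
      · fun_prop
    obtain ⟨c, hc, hcmin⟩ :=
      isCompact_Icc.exists_isMinOn (nonempty_Icc.2 hrb.le) hφcont
    have hφc : φ c < 0 := lt_of_le_of_lt (hcmin hy0) (sub_neg.2 hy0')
    have hcIoo : c ∈ Ioo r b := by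
      refine ⟨hc.1.lt_of_ne fun h => ?_, hc.2.lt_of_ne fun h => ?_⟩
      · rw [← h] at hφc; rw [hφr] at hφc; exact lt_irrefl 0 hφc
      · rw [h] at hφc; rw [hφb] at hφc; exact lt_irrefl 0 hφc
    have hcab : c ∈ Ioo a b := ⟨har.trans hcIoo.1, hcIoo.2⟩
    have hloc : IsLocalMin φ c := hcmin.isLocalMin (Icc_mem_nhds hcIoo.1 hcIoo.2)
    have hψc : ψ c = 0 := hloc.hasDerivAt_eq_zero (hφderiv c hcab)
    have hcr : (0:ℝ) < c - r := sub_pos.2 hcIoo.1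
    have hψnn : ∀ x ∈ Ioo r c, 0 ≤ ψ x := by
      intro x hx
      have hxw : ((c - x) / (c - r)) • r + ((x - r) / (c - r)) • c = x := by
        simp only [smul_eq_mul]
        field_simp
        ring
      have h := hψconc.2 (show r ∈ Ioo a b from ⟨har, hrb⟩) hcab
        (show (0:ℝ) ≤ (c - x) / (c - r) from
          div_nonneg (by linarith [hx.2]) hcr.le)
        (show (0:ℝ) ≤ (x - r) / (c - r) from
          div_nonneg (by linarith [hx.1]) hcr.le)
        (by field_simp; ring)
      rw [hxw] at h
      simpa [hψr, hψc, smul_eq_mul] using h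
    have hmono : MonotoneOn φ (Icc r c) := by
      apply monotoneOn_of_deriv_nonneg (convex_Icc r c)
        (hφcont.mono (Icc_subset_Icc le_rfl hcIoo.2.le))
      · intro x hx
        rw [interior_Icc] at hx
        exact ((hφderiv x ⟨har.trans hx.1, hx.2.trans hcIoo.2⟩).differentiableAt).differentiableWithinAt
      · intro x hx
        rw [interior_Icc] at hx
        rw [(hφderiv x ⟨har.trans hx.1, hx.2.trans hcIoo.2⟩).deriv]
        exact hψnn x hx
    have : φ r ≤ φ c := hmono ⟨le_rfl, hcIoo.1.le⟩ ⟨hcIoo.1.le, le_rfl⟩ hcIoo.1.le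
    rw [hφr] at this
    exact absurd hφc (not_lt.2 this)
  refine ⟨key, ?_⟩
  have hGint : IntervalIntegrable G volume r b := by
    apply ContinuousOn.intervalIntegrable
    rw [uIcc_of_le hrb.le]
    exact hGcont.mono (Icc_subset_Icc har.le le_rfl)
  have hQcont : Continuous Q := by fun_prop
  have hQint : IntervalIntegrable Q volume r b := hQcont.intervalIntegrable r b
  have hmono := intervalIntegral.integral_mono_on hrb.le hQint hGint key
  have hQval : (∫ y in r..b, Q y) = (b - r) * ((2 / 3) * G r + (1 / 3) * G b) := by
    have hF : ∀ y ∈ uIcc r b,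
        HasDerivAt (fun y => G r * y + (y - r) ^ 3 / (3 * (b - r) ^ 2) * (G b - G r)) (Q y) y := by
      intro y _
      have h1 : HasDerivAt (fun y : ℝ => G r * y) (G r) y := by
        simpa using (hasDerivAt_id y).const_mul (G r)
      have h2 : HasDerivAt (fun y : ℝ => (y - r) ^ 3) (3 * (y - r) ^ 2) y := by
        simpa using ((hasDerivAt_id y).sub_const r).fun_pow 3
      have := h1.fun_add ((h2.div_const (3 * (b - r) ^ 2)).mul_const (G b - G r))
      refine this.congr_deriv ?_
      simp only [hQ]
      field_simp
    rw [intervalIntegral.integral_eq_sub_of_hasDerivAt hF hQint]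
    field_simp
    ring
  rw [← hQval]
  exact hmono
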